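/- arXiv:1112.0129 — 3 statements merged into one kernel-verified Lean document; each statement's English description precedes it below -/
import Mathlib

section
/- Let d ≥ 2, α ∈ (1,2), S the unit sphere in ℝ^d with normalized surface measure σ, and for x ∉ S, y ∈ S let P(x,y) = c · ||x|² − 1|^{α−1} / |x − y|^{d+α−2} with c > 0. For every β > 0 there is a constant C = C(α, β, d, c) > 0 such that for every y ∈ S, every finite positive Borel measure μ on S, and every x in the nontangential cone Γ_β(y) = {x : |x| ≠ 1, |x − y| < (1+β)|1 − |x||} with |x| < 2, one has ∫_S P(x,z) μ(dz) ≤ C · sup_{r>0} μ(B(y,r) ∩ S) / σ(B(y,r) ∩ S). -/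
open MeasureTheory Metric
open scoped ENNReal


lemma exists_rot {d : ℕ} (hd : 1 ≤ d) (u v : EuclideanSpace ℝ (Fin d))
    (hu : ‖u‖ = 1) (hv : ‖v‖ = 1) :
    ∃ R : EuclideanSpace ℝ (Fin d) ≃ₗᵢ[ℝ] EuclideanSpace ℝ (Fin d), R u = v := by
  have hcard : Module.finrank ℝ (EuclideanSpace ℝ (Fin d)) = Fintype.card (Fin d) := by
    simp [finrank_euclideanSpace_fin]
  set i0 : Fin d := ⟨0, hd⟩
  have horth : ∀ w : EuclideanSpace ℝ (Fin d), ‖w‖ = 1 →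
      Orthonormal ℝ (Set.restrict ({i0} : Set (Fin d)) (fun _ => w)) := by
    intro w hw
    constructor
    · intro i; simpa [Set.restrict] using hw
    · intro i j hij
      exact absurd (Subtype.ext (by
        have := i.2; have := j.2
        simp only [Set.mem_singleton_iff] at *
        rw [i.2.out, j.2.out]  )) hij
  obtain ⟨b, hb⟩ := (horth u hu).exists_orthonormalBasis_extension_of_card_eq hcard
  obtain ⟨b', hb'⟩ := (horth v hv).exists_orthonormalBasis_extension_of_card_eq hcard
  refine ⟨b.repr.trans b'.repr.symm, ?_⟩
  have h1 : b.repr u = EuclideanSpace.single i0 (1:ℝ) := by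
    rw [← hb i0 rfl]; exact b.repr_self i0
  have h2 : b'.repr.symm (EuclideanSpace.single i0 (1:ℝ)) = v := by
    rw [← hb' i0 rfl]; exact b'.repr_symm_single i0
  simp [LinearIsometryEquiv.trans_apply, h1, h2]

lemma cap_eq {d : ℕ} (hd : 1 ≤ d) (σ : Measure (EuclideanSpace ℝ (Fin d)))
    (hσinv : ∀ R : EuclideanSpace ℝ (Fin d) ≃ₗᵢ[ℝ] EuclideanSpace ℝ (Fin d),
      Measure.map R σ = σ)
    (u v : EuclideanSpace ℝ (Fin d)) (hu : ‖u‖ = 1) (hv : ‖v‖ = 1) (r : ℝ) :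
    σ (ball u r) = σ (ball v r) := by
  obtain ⟨R, hR⟩ := exists_rot hd u v hu hv
  have := hσinv R
  have hmap : Measure.map R σ (ball v r) = σ (ball v r) := by rw [this]
  rw [Measure.map_apply (R.continuous.measurable) measurableSet_ball] at hmap
  rw [← hmap]
  congr 1
  ext z
  simp only [Set.mem_preimage, mem_ball]
  rw [← hR]
  rw [R.dist_map]


-- separated set with net property, on the sphere
lemma exists_net {d : ℕ} (hd : 1 ≤ d) {r : ℝ} (hr : 0 < r) :
    ∃ T : Finset (EuclideanSpace ℝ (Fin d)),
      (↑T ⊆ sphere (0 : EuclideanSpace ℝ (Fin d)) 1) ∧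
      (∀ a ∈ T, ∀ b ∈ T, a ≠ b → 2*r ≤ dist a b) ∧
      (∀ p ∈ sphere (0 : EuclideanSpace ℝ (Fin d)) 1, ∃ a ∈ T, dist p a < 2*r) := by
  set E := EuclideanSpace ℝ (Fin d)
  obtain ⟨t, hts, htf, htcov⟩ := (isCompact_sphere (0:E) 1).finite_cover_balls hr
  classical
  set T0 : Finset E := htf.toFinset with hT0
  set pred : Finset E → Prop := fun T =>
    (↑T ⊆ sphere (0 : E) 1) ∧ (∀ a ∈ T, ∀ b ∈ T, a ≠ b → 2*r ≤ dist a b) with hpred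
  -- card bound
  have hcard : ∀ T : Finset E, pred T → T.card ≤ T0.card := by
    intro T hT
    set f : E → E := fun a => if h : ∃ ct ∈ T0, a ∈ ball ct r then h.choose else 0 with hf
    apply Finset.card_le_card_of_injOn f
    · intro a ha
      have has : a ∈ sphere (0:E) 1 := hT.1 ha
      have : ∃ ct ∈ T0, a ∈ ball ct r := by
        have := htcov has
        simp only [Set.mem_iUnion] at this
        obtain ⟨i, hi, hmem⟩ := this
        exact ⟨i, by simp [hT0, hi], hmem⟩
      rw [hf]; simp only [this, dif_pos]
      exact this.choose_spec.1
    · intro a ha b hb hfab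
      by_contra hab
      have hEa : ∃ ct ∈ T0, a ∈ ball ct r := by
        have := htcov (hT.1 ha); simp only [Set.mem_iUnion] at this
        obtain ⟨i, hi, hmem⟩ := this; exact ⟨i, by simp [hT0, hi], hmem⟩
      have hEb : ∃ ct ∈ T0, b ∈ ball ct r := by
        have := htcov (hT.1 hb); simp only [Set.mem_iUnion] at this
        obtain ⟨i, hi, hmem⟩ := this; exact ⟨i, by simp [hT0, hi], hmem⟩
      have hfa : a ∈ ball (f a) r := by rw [hf]; simp only [hEa, dif_pos]; exact hEa.choose_spec.2
      have hfb : b ∈ ball (f b) r := by rw [hf]; simp only [hEb, dif_pos]; exact hEb.choose_spec.2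
      rw [hfab] at hfa
      have : dist a b < 2*r := by
        calc dist a b ≤ dist a (f b) + dist (f b) b := dist_triangle _ _ _
        _ < r + r := by
            rw [mem_ball] at hfa hfb
            rw [dist_comm (f b) b]; exact add_lt_add hfa hfb
        _ = 2*r := by ring
      exact absurd (hT.2 a ha b hb hab) (not_le.mpr this)
  set A : Set ℕ := {n | ∃ T : Finset E, pred T ∧ T.card = n} with hA
  have hAne : A.Nonempty := ⟨0, ∅, ⟨by simp, by simp⟩, rfl⟩
  have hAbdd : BddAbove A := by
    refine ⟨T0.card, ?_⟩
    rintro n ⟨T, hT, rfl⟩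
    exact hcard T hT
  obtain ⟨T, hT, hTcard⟩ := Nat.sSup_mem hAne hAbdd
  refine ⟨T, hT.1, hT.2, ?_⟩
  intro p hp
  by_contra hcon
  push_neg at hcon
  have hpT : p ∉ T := by
    intro hpT
    have := hcon p hpT
    simp only [dist_self] at this
    linarith
  have hT' : pred (insert p T) := by
    constructor
    · intro z hz
      simp only [Finset.coe_insert, Set.mem_insert_iff] at hz
      rcases hz with rfl | hz
      · exact hp
      · exact hT.1 hz
    · intro a ha b hb hab
      simp only [Finset.mem_insert] at ha hb
      rcases ha with rfl | ha
      · rcases hb with rfl | hb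
        · exact absurd rfl hab
        · exact hcon b hb
      · rcases hb with rfl | hb
        · rw [dist_comm]; exact hcon a ha
        · exact hT.2 a ha b hb hab
  have : T.card + 1 ∈ A := ⟨insert p T, hT', by rw [Finset.card_insert_of_notMem hpT]⟩
  have := le_csSup hAbdd this
  omega


lemma cap_bound {d : ℕ} (hd : 1 ≤ d) (σ : Measure (EuclideanSpace ℝ (Fin d)))
    [IsProbabilityMeasure σ]
    (hσinv : ∀ R : EuclideanSpace ℝ (Fin d) ≃ₗᵢ[ℝ] EuclideanSpace ℝ (Fin d),
      Measure.map R σ = σ)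
    (y : EuclideanSpace ℝ (Fin d)) (hy : ‖y‖ = 1) {r : ℝ} (hr : 0 < r) :
    (σ (ball y r)).toReal ≤ 3^d * r^(d-1) := by
  have hE : True := trivial
  haveI : Nontrivial (EuclideanSpace ℝ (Fin d)) := by
    apply Module.nontrivial_of_finrank_pos (R := ℝ)
    rw [finrank_euclideanSpace_fin]; omega
  obtain ⟨T, hTs, hTsep, hTnet⟩ := exists_net hd hr
  set ω := volume (ball (0:EuclideanSpace ℝ (Fin d)) 1) with hω
  have hω0 : ω ≠ 0 := (measure_ball_pos volume 0 one_pos).ne'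
  have hωtop : ω ≠ ⊤ := measure_ball_lt_top.ne
  -- volume lower bound on cardinality of T
  have hannsub : ball (0:EuclideanSpace ℝ (Fin d)) (1+r) \ closedBall 0 1 ⊆ ⋃ a ∈ T, ball a (3*r) := by
    intro x hx
    obtain ⟨hx1, hx2⟩ := hx
    rw [mem_ball, dist_zero_right] at hx1
    rw [mem_closedBall, dist_zero_right, not_le] at hx2
    have hxn : (0:ℝ) < ‖x‖ := lt_trans one_pos hx2
    set p : EuclideanSpace ℝ (Fin d) := ‖x‖⁻¹ • x with hp
    have hpn : ‖p‖ = 1 := by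
      rw [hp, norm_smul, norm_inv, norm_norm, inv_mul_cancel₀ hxn.ne']
    have hdxp : dist x p < r := by
      rw [hp, dist_eq_norm]
      have : x - ‖x‖⁻¹ • x = (1 - ‖x‖⁻¹) • x := by
        rw [sub_smul, one_smul]
      rw [this, norm_smul, Real.norm_eq_abs]
      have h1 : |1 - ‖x‖⁻¹| = 1 - ‖x‖⁻¹ := by
        rw [abs_of_nonneg]
        have : ‖x‖⁻¹ < 1 := by
          rw [inv_lt_one_iff₀]; right; exact hx2
        linarith
      rw [h1]
      have : (1 - ‖x‖⁻¹) * ‖x‖ = ‖x‖ - 1 := by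
        field_simp
      rw [this]
      linarith
    obtain ⟨a, haT, hpa⟩ := hTnet p (by simpa using hpn)
    refine Set.mem_biUnion haT ?_
    rw [mem_ball]
    calc dist x a ≤ dist x p + dist p a := dist_triangle _ _ _
    _ < r + 2*r := add_lt_add hdxp hpa
    _ = 3*r := by ring
  have hvolann : ENNReal.ofReal r * ω ≤ volume (ball (0:EuclideanSpace ℝ (Fin d)) (1+r) \ closedBall 0 1) := by
    rw [measure_diff (closedBall_subset_ball (by linarith)) measurableSet_closedBall.nullMeasurableSet
      measure_closedBall_lt_top.ne]
    have hball : volume (ball (0:EuclideanSpace ℝ (Fin d)) (1+r)) = ENNReal.ofReal ((1+r)^d) * ω := by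
      rw [Measure.addHaar_ball volume _ (by linarith : (0:ℝ) ≤ 1+r), finrank_euclideanSpace_fin]
    have hcball : volume (closedBall (0:EuclideanSpace ℝ (Fin d)) 1) = ω := by
      rw [Measure.addHaar_closedBall volume _ zero_le_one, finrank_euclideanSpace_fin]
      simp
      exact hω.symm
    rw [hball, hcball]
    apply ENNReal.le_sub_of_add_le_right hωtop
    calc ENNReal.ofReal r * ω + ω = (ENNReal.ofReal r + 1) * ω := by rw [add_mul, one_mul]
    _ = ENNReal.ofReal (1+r) * ω := by
        rw [← ENNReal.ofReal_one, ← ENNReal.ofReal_add (le_of_lt hr) zero_le_one]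
        ring_nf
    _ ≤ ENNReal.ofReal ((1+r)^d) * ω := by
        apply mul_le_mul_left
        apply ENNReal.ofReal_le_ofReal
        have : (1:ℝ) ≤ (d:ℝ) := Nat.one_le_cast.mpr hd
        calc (1:ℝ) + r ≤ 1 + d * r := by nlinarith
        _ ≤ (1+r)^d := one_add_mul_le_pow (by linarith) d
  have hvolup : volume (ball (0:EuclideanSpace ℝ (Fin d)) (1+r) \ closedBall 0 1) ≤ T.card * (ENNReal.ofReal ((3*r)^d) * ω) := by
    calc volume (ball (0:EuclideanSpace ℝ (Fin d)) (1+r) \ closedBall 0 1) ≤ volume (⋃ a ∈ T, ball a (3*r)) :=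
      measure_mono hannsub
    _ ≤ ∑ a ∈ T, volume (ball a (3*r)) := measure_biUnion_finset_le T _
    _ = T.card * (ENNReal.ofReal ((3*r)^d) * ω) := by
        rw [Finset.sum_congr rfl (fun a _ => ?_), Finset.sum_const, nsmul_eq_mul]
        rw [Measure.addHaar_ball volume _ (by linarith : (0:ℝ) ≤ 3*r), finrank_euclideanSpace_fin]
  -- cardinality bound : ofReal r ≤ T.card * ofReal ((3r)^d)
  have hcardlb : ENNReal.ofReal r ≤ T.card * ENNReal.ofReal ((3*r)^d) := by
    have := le_trans hvolann hvolup
    rw [← mul_assoc] at this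
    exact (ENNReal.mul_le_mul_iff_left hω0 hωtop).mp this
  -- disjointness: T.card * σ(ball y r) ≤ 1
  have hdisj : (T : Set (EuclideanSpace ℝ (Fin d))).PairwiseDisjoint (fun a => ball a r) := by
    intro a ha b hb hab
    exact ball_disjoint_ball (by
      have := hTsep a (by exact_mod_cast ha) b (by exact_mod_cast hb) hab
      linarith)
  have hsum : (T.card : ℝ≥0∞) * σ (ball y r) ≤ 1 := by
    have : ∑ a ∈ T, σ (ball a r) = T.card * σ (ball y r) := by
      rw [Finset.sum_congr rfl (fun a ha => cap_eq hd σ hσinv a y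
        (by simpa [mem_sphere_zero_iff_norm] using hTs ha) hy r),
        Finset.sum_const, nsmul_eq_mul]
    rw [← this, ← measure_biUnion_finset hdisj (fun a _ => measurableSet_ball)]
    calc σ (⋃ a ∈ T, ball a r) ≤ σ Set.univ := measure_mono (Set.subset_univ _)
    _ = 1 := measure_univ
  -- combine
  have hfin : σ (ball y r) ≤ ENNReal.ofReal (3^d * r^(d-1)) := by
    have h1 : σ (ball y r) * ENNReal.ofReal r ≤ ENNReal.ofReal ((3*r)^d) := by
      calc σ (ball y r) * ENNReal.ofReal r ≤ σ (ball y r) * (T.card * ENNReal.ofReal ((3*r)^d)) :=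
        mul_le_mul_right hcardlb _
      _ = (T.card * σ (ball y r)) * ENNReal.ofReal ((3*r)^d) := by ring
      _ ≤ 1 * ENNReal.ofReal ((3*r)^d) := mul_le_mul_left hsum _
      _ = ENNReal.ofReal ((3*r)^d) := one_mul _
    have h2 : σ (ball y r) ≤ ENNReal.ofReal ((3*r)^d) / ENNReal.ofReal r := by
      rw [ENNReal.le_div_iff_mul_le (Or.inl (by simp [hr])) (Or.inl ENNReal.ofReal_ne_top)]
      exact h1
    calc σ (ball y r) ≤ ENNReal.ofReal ((3*r)^d) / ENNReal.ofReal r := h2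
    _ = ENNReal.ofReal ((3*r)^d / r) := by rw [← ENNReal.ofReal_div_of_pos hr]
    _ = ENNReal.ofReal (3^d * r^(d-1)) := by
        congr 1
        rw [mul_pow]
        rw [div_eq_iff hr.ne']
        rw [mul_assoc, ← pow_succ]
        congr 2
        omega
  calc (σ (ball y r)).toReal ≤ (ENNReal.ofReal (3^d * r^(d-1))).toReal :=
    ENNReal.toReal_mono ENNReal.ofReal_ne_top hfin
  _ = 3^d * r^(d-1) := ENNReal.toReal_ofReal (by positivity)


lemma key_id (d : ℕ) (hd : 1 ≤ d) (α β c t : ℝ) (hα1 : 1 < α)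
    (hβ : 0 < β) (ht : 0 < t) (k : ℕ) :
    (3:ℝ)^d * (2^k * (2*(1+β)*t))^(d-1) *
      (c * (3*t)^(α-1) / (t * 2^k / (4*(1+β))) ^ ((d:ℝ)+α-2))
    = (c * 3^(α-1) * (4*(1+β))^((d:ℝ)+α-2) * 3^d * (2*(1+β))^(d-1)) *
        ((2:ℝ)^((1:ℝ)-α))^k := by
  have hq : (0:ℝ) < 2^k := by positivity
  have hu : (0:ℝ) < 2*(1+β) := by linarith
  have hκ : (0:ℝ) < 4*(1+β) := by linarith
  set e : ℝ := (d:ℝ)+α-2 with he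
  -- convert nat pows of t, q into rpow
  have h3t : (3*t) ^ (α-1) = 3^(α-1) * t^(α-1) := Real.mul_rpow (by norm_num) ht.le
  have hden : (t * 2^k / (4*(1+β))) ^ e = t^e * ((2:ℝ)^k)^e / (4*(1+β))^e := by
    rw [Real.div_rpow (by positivity) hκ.le, Real.mul_rpow ht.le hq.le]
  have hmul : ((2:ℝ)^k * (2*(1+β)*t))^(d-1) = ((2:ℝ)^k)^(d-1) * (2*(1+β))^(d-1) * t^(d-1) := by
    rw [mul_pow, mul_pow]; ring
  have htnat : (t:ℝ)^(d-1) = t ^ ((d:ℝ)-1) := by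
    rw [← Real.rpow_natCast t (d-1)]
    congr 1
    push_cast [Nat.cast_sub hd]
    ring
  have hqnat : ((2:ℝ)^k)^(d-1) = ((2:ℝ)^k) ^ ((d:ℝ)-1) := by
    rw [← Real.rpow_natCast ((2:ℝ)^k) (d-1)]
    congr 1
    push_cast [Nat.cast_sub hd]
    ring
  have hrho : ((2:ℝ)^((1:ℝ)-α))^k = ((2:ℝ)^k) ^ ((1:ℝ)-α) := by
    rw [← Real.rpow_natCast ((2:ℝ)^((1:ℝ)-α)) k, ← Real.rpow_natCast (2:ℝ) k,
      ← Real.rpow_mul (by norm_num), ← Real.rpow_mul (by norm_num), mul_comm]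
  -- t exponents combine: t^(d-1) * t^(α-1) = t^e
  have ht1 : t ^ ((d:ℝ)-1) * t^(α-1) = t^e := by
    rw [← Real.rpow_add ht]; congr 1; rw [he]; ring
  -- q exponents: q^(d-1) = q^e * q^(1-α)
  have hq1 : ((2:ℝ)^k) ^ ((d:ℝ)-1) = ((2:ℝ)^k)^e * ((2:ℝ)^k)^((1:ℝ)-α) := by
    rw [← Real.rpow_add hq]; congr 1; rw [he]; ring
  rw [h3t, hden, hmul, htnat, hqnat, hrho, hq1]
  have hte : (0:ℝ) < t ^ e := Real.rpow_pos_of_pos ht _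
  have hqe : (0:ℝ) < ((2:ℝ)^k) ^ e := Real.rpow_pos_of_pos hq _
  have hκe : (0:ℝ) < (4*(1+β)) ^ e := Real.rpow_pos_of_pos hκ _
  field_simp
  linear_combination c * ht1


lemma div_le_self' (t β : ℝ) (ht : 0 < t) (hβ : 0 < β) : t / (4*(1+β)) ≤ t := by
  rw [div_le_iff₀ (by linarith)]
  nlinarith

lemma annulus_low (β t p : ℝ) (hβ : 0 < β) (ht : 0 < t) (hp : 1 ≤ p) :
    t * (p * 2) / (4*(1+β)) ≤ p * (2*(1+β)*t) - (1+β)*t := by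
  rw [div_le_iff₀ (by linarith)]
  nlinarith [mul_nonneg (mul_nonneg ht.le (by nlinarith : (0:ℝ) ≤ (1+β)^2 - 1))
      (by linarith : (0:ℝ) ≤ 2*p - 1),
    mul_nonneg ht.le (by linarith : (0:ℝ) ≤ p - 1), ht]

set_option maxHeartbeats 2000000 in
theorem nontangential_maximal_bound
    (d : ℕ) (hd : 2 ≤ d) (α c : ℝ) (hα : α ∈ Set.Ioo (1:ℝ) 2) (hc : 0 < c)
    (σ : Measure (EuclideanSpace ℝ (Fin d))) [IsProbabilityMeasure σ]
    (hσsupp : σ (Metric.sphere (0 : EuclideanSpace ℝ (Fin d)) 1)ᶜ = 0)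
    (hσinv : ∀ R : EuclideanSpace ℝ (Fin d) ≃ₗᵢ[ℝ] EuclideanSpace ℝ (Fin d),
      Measure.map R σ = σ)
    (P : EuclideanSpace ℝ (Fin d) → EuclideanSpace ℝ (Fin d) → ℝ)
    (hP : ∀ x y : EuclideanSpace ℝ (Fin d), ‖x‖ ≠ 1 → ‖y‖ = 1 →
      P x y = c * |‖x‖ ^ 2 - 1| ^ (α - 1) / ‖x - y‖ ^ ((d : ℝ) + α - 2)) :
    ∀ β : ℝ, 0 < β → ∃ C : ℝ, 0 < C ∧
      ∀ y : EuclideanSpace ℝ (Fin d), ‖y‖ = 1 →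
      ∀ μ : Measure (EuclideanSpace ℝ (Fin d)), IsFiniteMeasure μ →
        μ (Metric.sphere (0 : EuclideanSpace ℝ (Fin d)) 1)ᶜ = 0 →
      ∀ L : ℝ, (∀ r : ℝ, 0 < r →
        (μ (Metric.ball y r)).toReal ≤ L * (σ (Metric.ball y r)).toReal) →
      ∀ x : EuclideanSpace ℝ (Fin d), ‖x‖ ≠ 1 →
        ‖x - y‖ < (1 + β) * |1 - ‖x‖| → ‖x‖ < 2 →
        ∫ z, P x z ∂μ ≤ C * L := by
  intro β hβ
  obtain ⟨hα1, hα2⟩ := hα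
  have hd1 : 1 ≤ d := by omega
  have hd2 : (2:ℝ) ≤ (d:ℝ) := by exact_mod_cast hd
  set ρ : ℝ := (2:ℝ) ^ ((1:ℝ) - α) with hρdef
  have hρ0 : 0 < ρ := Real.rpow_pos_of_pos two_pos _
  have hρ1 : ρ < 1 := Real.rpow_lt_one_of_one_lt_of_neg one_lt_two (by linarith)
  set e : ℝ := (d:ℝ) + α - 2 with he
  have he0 : 0 < e := by rw [he]; linarith
  set κ : ℝ := 4 * (1 + β) with hκdef
  have hκ1 : (1:ℝ) ≤ κ := by rw [hκdef]; nlinarith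
  set C0 : ℝ := c * 3 ^ (α-1) * κ ^ e * 3^d * (2*(1+β))^(d-1) with hC0def
  have hC0pos : 0 < C0 := by
    rw [hC0def]
    have h1 : (0:ℝ) < 3 ^ (α-1) := Real.rpow_pos_of_pos (by norm_num) _
    have h2 : (0:ℝ) < κ ^ e := Real.rpow_pos_of_pos (by linarith) _
    positivity
  have hρ2 : (0:ℝ) < 1 - ρ := by linarith
  refine ⟨C0 * (1 - ρ)⁻¹ + 1, by positivity, ?_⟩
  intro y hy μ hμfin hμsupp L hL x hxn hxcone hx2
  -- a.e. every point is on the sphere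
  have hsph : ∀ᵐ z ∂μ, ‖z‖ = 1 := by
    rw [ae_iff]
    convert hμsupp using 2
    ext z
    simp [mem_sphere_zero_iff_norm]
  -- L is nonnegative
  have hσ3 : σ (ball y 3) = 1 := by
    refine le_antisymm prob_le_one ?_
    have hsub : sphere (0 : EuclideanSpace ℝ (Fin d)) 1 ⊆ ball y 3 := by
      intro z hz
      rw [mem_sphere_zero_iff_norm] at hz
      rw [mem_ball, dist_eq_norm]
      calc ‖z - y‖ ≤ ‖z‖ + ‖y‖ := norm_sub_le _ _
      _ < 3 := by rw [hz, hy]; norm_num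
    have hone : σ (sphere (0 : EuclideanSpace ℝ (Fin d)) 1) = 1 := by
      have h := measure_add_measure_compl (μ := σ) (s := sphere (0 : EuclideanSpace ℝ (Fin d)) 1) (isClosed_sphere.measurableSet)
      rw [hσsupp, add_zero] at h
      rw [h, measure_univ]
    calc (1:ℝ≥0∞) = σ (sphere (0 : EuclideanSpace ℝ (Fin d)) 1) := hone.symm
    _ ≤ σ (ball y 3) := measure_mono hsub
  have hL0 : 0 ≤ L := by
    have := hL 3 (by norm_num)
    rw [hσ3] at this
    simp only [ENNReal.toReal_one, mul_one] at this
    exact le_trans ENNReal.toReal_nonneg this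
  -- geometry setup
  set t : ℝ := |1 - ‖x‖| with htdef
  have ht0 : 0 < t := by
    rw [htdef, abs_pos]
    intro h
    exact hxn (by linarith)
  set r0 : ℝ := 2 * (1 + β) * t with hr0def
  have hr00 : 0 < r0 := by rw [hr0def]; positivity
  have hxy : ‖x - y‖ < (1 + β) * t := hxcone
  -- numerator bound
  have hnum : |‖x‖^2 - 1| ≤ 3 * t := by
    have h1 : ‖x‖^2 - 1 = (‖x‖ - 1) * (‖x‖ + 1) := by ring
    have h2 : |‖x‖ - 1| = t := by rw [htdef, abs_sub_comm]
    have h3 : |‖x‖ + 1| ≤ 3 := by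
      rw [abs_of_nonneg (by positivity)]; linarith
    calc |‖x‖^2 - 1| = |‖x‖ - 1| * |‖x‖ + 1| := by rw [h1, abs_mul]
    _ ≤ t * 3 := mul_le_mul h2.le h3 (abs_nonneg _) ht0.le
    _ = 3 * t := by ring
  -- lower bound ‖x - z‖ ≥ t for unit z
  have hxzt : ∀ z : EuclideanSpace ℝ (Fin d), ‖z‖ = 1 → t ≤ ‖x - z‖ := by
    intro z hz
    calc t = |‖x‖ - ‖z‖| := by rw [hz, htdef, abs_sub_comm]
    _ ≤ ‖x - z‖ := abs_norm_sub_norm_le _ _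
  -- choose K with 3 < 2^K * r0
  obtain ⟨K, hK⟩ := pow_unbounded_of_one_lt (3 / r0) one_lt_two
  have hK3 : 3 < 2^K * r0 := by
    rw [div_lt_iff₀ hr00] at hK
    linarith [hK]
  -- annuli
  set Ek : ℕ → Set (EuclideanSpace ℝ (Fin d)) := fun k =>
    match k with
    | 0 => ball y r0
    | (k+1) => ball y (2^(k+1) * r0) \ ball y (2^k * r0) with hEkdef
  have hEkmeas : ∀ k, MeasurableSet (Ek k) := by
    intro k
    match k with
    | 0 => exact measurableSet_ball
    | (k+1) => exact measurableSet_ball.diff measurableSet_ball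
  have hEksub : ∀ k, Ek k ⊆ ball y (2^k * r0) := by
    intro k
    match k with
    | 0 => rw [pow_zero, one_mul]
    | (k+1) => exact Set.diff_subset
  set bound : ℕ → ℝ := fun k => c * (3*t)^(α-1) / (t * 2^k / κ) ^ e with hbounddef
  have hboundpos : ∀ k, 0 < bound k := by
    intro k
    rw [hbounddef]
    have h1 : (0:ℝ) < (3*t)^(α-1) := Real.rpow_pos_of_pos (by linarith) _
    have h2 : (0:ℝ) < (t * 2^k / κ) ^ e := Real.rpow_pos_of_pos (by positivity) _
    positivity
  set G : EuclideanSpace ℝ (Fin d) → ℝ := fun z =>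
    ∑ k ∈ Finset.range (K+1), (Ek k).indicator (fun _ => bound k) z with hGdef
  -- pointwise bound on the sphere
  have hpoint : ∀ z : EuclideanSpace ℝ (Fin d), ‖z‖ = 1 → P x z ≤ G z := by
    intro z hz
    have hQ : ∃ k, z ∈ ball y (2^k * r0) := by
      refine ⟨K, ?_⟩
      rw [mem_ball, dist_eq_norm]
      calc ‖z - y‖ ≤ ‖z‖ + ‖y‖ := norm_sub_le _ _
      _ = 2 := by rw [hz, hy]; norm_num
      _ < 2^K * r0 := by linarith
    classical
    obtain ⟨k₀, hk₀mem, hk₀min⟩ :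
        ∃ k, z ∈ ball y (2^k * r0) ∧ ∀ j, j < k → z ∉ ball y (2^j * r0) :=
      ⟨Nat.find hQ, Nat.find_spec hQ, fun j hj => Nat.find_min hQ hj⟩
    have hk₀le : k₀ ≤ K := by
      by_contra hcon
      push_neg at hcon
      refine hk₀min K hcon ?_
      rw [mem_ball, dist_eq_norm]
      calc ‖z - y‖ ≤ ‖z‖ + ‖y‖ := norm_sub_le _ _
      _ = 2 := by rw [hz, hy]; norm_num
      _ < 2^K * r0 := by linarith
    have hzE : z ∈ Ek k₀ := by
      rcases Nat.eq_zero_or_pos k₀ with hk0 | hk0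
      · rw [hk0]
        rw [hk0, pow_zero, one_mul] at hk₀mem
        exact hk₀mem
      · have hk0' : k₀ = (k₀ - 1) + 1 := by omega
        rw [hk0']
        refine ⟨by rw [← hk0']; exact hk₀mem, ?_⟩
        exact hk₀min _ (by omega)
    -- lower bound on ‖x - z‖
    have hlow : t * 2^k₀ / κ ≤ ‖x - z‖ := by
      rcases Nat.eq_zero_or_pos k₀ with hk0 | hk0
      · rw [hk0, pow_zero, mul_one]
        calc t / κ ≤ t := by
              rw [div_le_iff₀ (by linarith)]
              nlinarith
        _ ≤ ‖x - z‖ := hxzt z hz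
      · have hk0' : k₀ = (k₀ - 1) + 1 := by omega
        have hnotin : z ∉ ball y (2^(k₀-1) * r0) := hk₀min _ (by omega)
        rw [mem_ball, dist_eq_norm, not_lt] at hnotin
        have hzy : 2^(k₀-1) * r0 ≤ ‖z - y‖ := hnotin
        have htri : ‖z - y‖ - ‖x - y‖ ≤ ‖x - z‖ := by
          have h1 : ‖z - y‖ ≤ ‖z - x‖ + ‖x - y‖ := by
            calc ‖z - y‖ = ‖(z - x) + (x - y)‖ := by rw [sub_add_sub_cancel]
            _ ≤ ‖z - x‖ + ‖x - y‖ := norm_add_le _ _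
          rw [norm_sub_rev z x] at h1
          linarith
        have h2k : (1:ℝ) ≤ 2^(k₀-1) := one_le_pow₀ (by norm_num)
        have hkey : t * 2^k₀ / κ ≤ 2^(k₀-1) * r0 - (1+β)*t := by
          have h2 : (2:ℝ)^k₀ = 2^(k₀-1) * 2 := by
            conv_lhs => rw [hk0']
            rw [pow_succ]
          rw [h2, hκdef, hr0def]
          exact annulus_low β t _ hβ ht0 h2k
        calc t * 2^k₀ / κ ≤ 2^(k₀-1) * r0 - (1+β)*t := hkey
        _ ≤ ‖z - y‖ - ‖x - y‖ := sub_le_sub hzy hxy.le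
        _ ≤ ‖x - z‖ := htri
    -- P x z ≤ bound k₀
    have hPz : P x z ≤ bound k₀ := by
      rw [hP x z hxn hz, hbounddef]
      have hb1 : (0:ℝ) < t * 2^k₀ / κ := by positivity
      apply div_le_div₀ (by positivity)
      · apply mul_le_mul_of_nonneg_left _ hc.le
        exact Real.rpow_le_rpow (abs_nonneg _) hnum (by linarith)
      · exact Real.rpow_pos_of_pos hb1 _
      · exact Real.rpow_le_rpow hb1.le hlow he0.le
    have hsingle : bound k₀ ≤ G z := by
      rw [hGdef]
      have hmem : k₀ ∈ Finset.range (K+1) := Finset.mem_range.mpr (by omega)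
      have heq : (Ek k₀).indicator (fun _ => bound k₀) z = bound k₀ :=
        Set.indicator_of_mem hzE _
      calc bound k₀ = (Ek k₀).indicator (fun _ => bound k₀) z := heq.symm
      _ ≤ ∑ k ∈ Finset.range (K+1), (Ek k).indicator (fun _ => bound k) z :=
        Finset.single_le_sum (f := fun k => (Ek k).indicator (fun _ => bound k) z)
          (fun k _ => Set.indicator_nonneg (fun _ _ => (hboundpos k).le) z) hmem
    exact le_trans hPz hsingle
  -- f : the explicit kernel
  set f : EuclideanSpace ℝ (Fin d) → ℝ :=
    fun z => c * |‖x‖^2 - 1|^(α-1) / ‖x - z‖ ^ e with hfdef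
  have hcont : Continuous fun z : EuclideanSpace ℝ (Fin d) => ‖x - z‖ ^ e := by
    have h1 : Continuous fun z : EuclideanSpace ℝ (Fin d) => ‖x - z‖ :=
      (continuous_const.sub continuous_id).norm
    exact h1.rpow_const (fun z => Or.inr he0.le)
  have hfmeas : Measurable f := measurable_const.div hcont.measurable
  have hfnonneg : ∀ z, 0 ≤ f z := by
    intro z
    rw [hfdef]
    have h1 : (0:ℝ) ≤ |‖x‖^2 - 1|^(α-1) := Real.rpow_nonneg (abs_nonneg _) _
    have h2 : (0:ℝ) ≤ ‖x - z‖ ^ e := Real.rpow_nonneg (norm_nonneg _) _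
    positivity
  have hfB : ∀ z : EuclideanSpace ℝ (Fin d), ‖z‖ = 1 → f z ≤ bound 0 := by
    intro z hz
    rw [hfdef, hbounddef]
    have hb1 : (0:ℝ) < t * 2^0 / κ := by positivity
    apply div_le_div₀ (by positivity)
    · apply mul_le_mul_of_nonneg_left _ hc.le
      exact Real.rpow_le_rpow (abs_nonneg _) hnum (by linarith)
    · exact Real.rpow_pos_of_pos hb1 _
    · refine Real.rpow_le_rpow hb1.le ?_ he0.le
      calc t * 2^0 / κ = t / (4*(1+β)) := by rw [pow_zero, mul_one, hκdef]
      _ ≤ t := div_le_self' t β ht0 hβ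
      _ ≤ ‖x - z‖ := hxzt z hz
  have hfae : (fun z => P x z) =ᵐ[μ] f := hsph.mono (fun z hz => hP x z hxn hz)
  have hfint : Integrable f μ := by
    refine Integrable.mono' (integrable_const (bound 0)) hfmeas.aestronglyMeasurable ?_
    refine hsph.mono (fun z hz => ?_)
    rw [Real.norm_eq_abs, abs_of_nonneg (hfnonneg z)]
    exact hfB z hz
  have hPint : Integrable (fun z => P x z) μ := hfint.congr hfae.symm
  have hGint : Integrable G μ := by
    apply integrable_finset_sum
    intro k _
    exact (integrable_const (bound k)).indicator (hEkmeas k)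
  have hfG : f ≤ᵐ[μ] G := by
    refine hsph.mono (fun z hz => ?_)
    have h := hpoint z hz
    rwa [hP x z hxn hz] at h
  have hgeom : ∑ k ∈ Finset.range (K+1), ρ^k ≤ (1-ρ)⁻¹ := by
    have hpow : (0:ℝ) ≤ ρ^(K+1) := by positivity
    rw [geom_sum_eq (ne_of_lt hρ1), inv_eq_one_div]
    rw [show (ρ^(K+1) - 1)/(ρ - 1) = (1 - ρ^(K+1))/(1 - ρ) by
      rw [← neg_div_neg_eq]; ring_nf]
    exact div_le_div₀ (by norm_num) (by linarith) hρ2 le_rfl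
  calc ∫ z, P x z ∂μ = ∫ z, f z ∂μ := integral_congr_ae hfae
  _ ≤ ∫ z, G z ∂μ := integral_mono_ae hfint hGint hfG
  _ = ∑ k ∈ Finset.range (K+1), (μ (Ek k)).toReal * bound k := by
      rw [hGdef]
      rw [integral_finset_sum _ (fun k _ => (integrable_const (bound k)).indicator (hEkmeas k))]
      refine Finset.sum_congr rfl (fun k _ => ?_)
      rw [integral_indicator_const (bound k) (hEkmeas k), smul_eq_mul]
      rfl
  _ ≤ ∑ k ∈ Finset.range (K+1), (C0 * L) * ρ^k := by
      refine Finset.sum_le_sum (fun k _ => ?_)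
      have hrk : (0:ℝ) < 2^k * r0 := by positivity
      have h1 : (μ (Ek k)).toReal ≤ L * (σ (ball y (2^k*r0))).toReal :=
        le_trans (ENNReal.toReal_mono (measure_ne_top μ _) (measure_mono (hEksub k)))
          (hL _ hrk)
      have h2 : (σ (ball y (2^k*r0))).toReal ≤ 3^d * (2^k*r0)^(d-1) :=
        cap_bound hd1 σ hσinv y hy hrk
      calc (μ (Ek k)).toReal * bound k
          ≤ (L * (3^d * (2^k*r0)^(d-1))) * bound k := by
            apply mul_le_mul_of_nonneg_right _ (hboundpos k).le
            exact le_trans h1 (mul_le_mul_of_nonneg_left h2 hL0)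
      _ = (C0 * L) * ρ^k := by
            have hk := key_id d hd1 α β c t hα1 hβ ht0 k
            rw [hr0def, hbounddef, hC0def, hρdef, hκdef, he]
            linear_combination L * hk
  _ = (C0 * L) * ∑ k ∈ Finset.range (K+1), ρ^k := by rw [Finset.mul_sum]
  _ ≤ (C0 * L) * (1-ρ)⁻¹ := by
      apply mul_le_mul_of_nonneg_left hgeom (by positivity)
  _ ≤ (C0 * (1-ρ)⁻¹ + 1) * L := by nlinarith [hL0]
end

section
/- Let d ≥ 2, α ∈ (1,2), S the unit sphere in ℝ^d with normalized surface measure σ, and P(x,y) = c · ||x|² − 1|^{α−1}/|x − y|^{d+α−2} for x ∉ S, y ∈ S. If f is continuous on S, then sup_{x∈S} | ∫_S P(r x, y) f(y) σ(dy) − φ(r) f(x) | → 0 as r → 1, where φ(r) = ∫_S P(r z, y) σ(dy) (which is independent of z ∈ S by rotation invariance); more precisely, for every δ > 0 and x ∈ S, ∫_{y∈S, |x−y|>δ} P(rx, y) σ(dy) ≤ c' |r² − 1|^{α−1} δ^{2−d−α} for a constant c' depending only on c and d, and this tends to 0 as r → 1 since α > 1. -/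
open MeasureTheory Filter

theorem poisson_kernel_sphere_tail_estimate
    (d : ℕ) (hd : 2 ≤ d) (α c : ℝ) (hα : α ∈ Set.Ioo (1:ℝ) 2) (hc : 0 < c)
    (σ : Measure (EuclideanSpace ℝ (Fin d))) [IsProbabilityMeasure σ]
    (hσsupp : σ (Metric.sphere (0 : EuclideanSpace ℝ (Fin d)) 1)ᶜ = 0)
    (hσinv : ∀ R : EuclideanSpace ℝ (Fin d) ≃ₗᵢ[ℝ] EuclideanSpace ℝ (Fin d),
      Measure.map R σ = σ)
    (P : EuclideanSpace ℝ (Fin d) → EuclideanSpace ℝ (Fin d) → ℝ)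
    (hP : ∀ x y : EuclideanSpace ℝ (Fin d), ‖x‖ ≠ 1 → ‖y‖ = 1 →
      P x y = c * |‖x‖ ^ 2 - 1| ^ (α - 1) / ‖x - y‖ ^ ((d : ℝ) + α - 2)) :
    ∃ c' : ℝ, 0 < c' ∧
      (∀ δ : ℝ, 0 < δ → ∀ x : EuclideanSpace ℝ (Fin d), ‖x‖ = 1 →
        ∀ r : ℝ, 0 ≤ r → r ≠ 1 →
          ∫ y in {y | δ < ‖x - y‖}, P (r • x) y ∂σ
            ≤ c' * |r ^ 2 - 1| ^ (α - 1) * δ ^ (2 - (d : ℝ) - α)) ∧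
      (∀ δ : ℝ, 0 < δ →
        Tendsto (fun r : ℝ => c' * |r ^ 2 - 1| ^ (α - 1) * δ ^ (2 - (d : ℝ) - α))
          (nhdsWithin 1 {(1 : ℝ)}ᶜ) (nhds 0)) := by
  have hd2 : (2 : ℝ) ≤ (d : ℝ) := by exact_mod_cast hd
  have hα1 : (1 : ℝ) < α := hα.1
  have hα2 : α < 2 := hα.2
  set e : ℝ := (d : ℝ) + α - 2 with he_def
  have he : 0 < e := by simp only [he_def]; linarith
  refine ⟨c * 2 ^ (d : ℝ), by positivity, ?_, ?_⟩
  · intro δ hδ x hx r hr hr1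
    set S : Set (EuclideanSpace ℝ (Fin d)) := Metric.sphere 0 1 with hS_def
    set A : Set (EuclideanSpace ℝ (Fin d)) := {y | δ < ‖x - y‖} with hA_def
    set B : ℝ := |r ^ 2 - 1| ^ (α - 1) with hB_def
    set M : ℝ := c * 2 ^ (d : ℝ) * B * δ ^ (2 - (d : ℝ) - α) with hM_def
    have hB0 : 0 ≤ B := Real.rpow_nonneg (abs_nonneg _) _
    have hM0 : 0 ≤ M := by positivity
    have hA : MeasurableSet A :=
      measurableSet_lt measurable_const ((continuous_const.sub continuous_id).norm.measurable)
    have hS : MeasurableSet S := Metric.isClosed_sphere.measurableSet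
    -- almost every point is on the sphere
    have h0 : ∀ᵐ y ∂σ, y ∈ S := by
      rw [ae_iff]
      exact hσsupp
    have hAe : A =ᵐ[σ] (A ∩ S : Set (EuclideanSpace ℝ (Fin d))) := by
      rw [Filter.eventuallyEq_set]
      filter_upwards [h0] with y hy
      simp only [Set.mem_inter_iff]
      tauto
    have hrx : ‖r • x‖ = r := by
      rw [norm_smul, hx, Real.norm_eq_abs, abs_of_nonneg hr, mul_one]
    -- pointwise bound on A ∩ S
    have key : ∀ y ∈ A ∩ S, ‖P (r • x) y‖ ≤ M := by
      rintro y ⟨hyA, hyS⟩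
      have hy1 : ‖y‖ = 1 := by
        simpa [hS_def] using mem_sphere_zero_iff_norm.mp hyS
      have hyA' : δ < ‖x - y‖ := hyA
      -- lower bound on ‖r • x - y‖
      have h2 : |1 - r| ≤ ‖r • x - y‖ := by
        have := abs_norm_sub_norm_le (r • x) y
        rw [hrx, hy1] at this
        rwa [abs_sub_comm]
      have h1 : ‖x - y‖ ≤ |1 - r| + ‖r • x - y‖ := by
        have : x - y = (x - r • x) + (r • x - y) := by abel
        rw [this]
        refine (norm_add_le _ _).trans ?_
        gcongr
        have : x - r • x = (1 - r) • x := by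
          rw [sub_smul, one_smul]
        rw [this, norm_smul, hx, mul_one, Real.norm_eq_abs]
      have hlow : δ / 2 < ‖r • x - y‖ := by
        have : δ < 2 * ‖r • x - y‖ := by linarith
        linarith
      have hPval := hP (r • x) y (by rw [hrx]; exact hr1) hy1
      have hformula : P (r • x) y = c * B / ‖r • x - y‖ ^ e := by
        rw [hPval, hrx, hB_def]
      have hden : (δ / 2) ^ e ≤ ‖r • x - y‖ ^ e :=
        Real.rpow_le_rpow (by positivity) hlow.le he.le
      have hdenpos : (0 : ℝ) < (δ / 2) ^ e := Real.rpow_pos_of_pos (by positivity) _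
      have hP0 : 0 ≤ P (r • x) y := by
        rw [hformula]
        have : (0:ℝ) < ‖r • x - y‖ ^ e := lt_of_lt_of_le hdenpos hden
        positivity
      rw [Real.norm_eq_abs, abs_of_nonneg hP0, hformula]
      calc c * B / ‖r • x - y‖ ^ e ≤ c * B / (δ / 2) ^ e := by
            apply div_le_div_of_nonneg_left (by positivity) hdenpos hden
        _ = c * B * 2 ^ e / δ ^ e := by
            rw [Real.div_rpow hδ.le (by norm_num : (0:ℝ) ≤ 2), div_div_eq_mul_div]
        _ ≤ c * B * 2 ^ (d : ℝ) / δ ^ e := by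
            have h2e : (2:ℝ) ^ e ≤ 2 ^ (d : ℝ) :=
              Real.rpow_le_rpow_of_exponent_le one_le_two (by simp only [he_def]; linarith)
            have hδe : (0:ℝ) < δ ^ e := Real.rpow_pos_of_pos hδ _
            gcongr
        _ = M := by
            have hexp : (2 : ℝ) - (d : ℝ) - α = -e := by simp only [he_def]; ring
            rw [hM_def, hexp, Real.rpow_neg hδ.le]
            ring
    calc ∫ y in A, P (r • x) y ∂σ
        = ∫ y in A ∩ S, P (r • x) y ∂σ := setIntegral_congr_set hAe
      _ ≤ ‖∫ y in A ∩ S, P (r • x) y ∂σ‖ := by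
          rw [Real.norm_eq_abs]; exact le_abs_self _
      _ ≤ M * (σ (A ∩ S)).toReal :=
          norm_setIntegral_le_of_norm_le_const (measure_lt_top _ _) key
      _ ≤ M * 1 := by
          refine mul_le_mul_of_nonneg_left ?_ hM0
          simpa using ENNReal.toReal_mono ENNReal.one_ne_top (prob_le_one)
      _ = c * 2 ^ (d : ℝ) * B * δ ^ (2 - (d : ℝ) - α) := mul_one _
  · intro δ hδ
    have h1 : Tendsto (fun r : ℝ => |r ^ 2 - 1|) (nhds 1) (nhds 0) := by
      have : Continuous fun r : ℝ => |r ^ 2 - 1| := by continuity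
      have := this.tendsto 1
      simpa using this
    have h2 : Tendsto (fun r : ℝ => |r ^ 2 - 1| ^ (α - 1)) (nhds 1) (nhds 0) := by
      have hc2 : ContinuousAt (fun t : ℝ => t ^ (α - 1)) 0 :=
        Real.continuousAt_rpow_const 0 (α - 1) (Or.inr (by linarith [hα.1]))
      have := hc2.tendsto.comp h1
      simpa [Function.comp_def, Real.zero_rpow (by linarith [hα.1] : α - 1 ≠ 0)] using this
    have h3 : Tendsto (fun r : ℝ => c * 2 ^ (d : ℝ) * |r ^ 2 - 1| ^ (α - 1)
        * δ ^ (2 - (d : ℝ) - α)) (nhds 1) (nhds 0) := by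
      have := (h2.const_mul (c * 2 ^ (d : ℝ))).mul_const (δ ^ (2 - (d : ℝ) - α))
      simpa using this
    exact h3.mono_left nhdsWithin_le_nhds
end

section
/- Let d ≥ 2, α ∈ (1,2), and let ω_α be the probability measure on ℝ^{d−1} with density C₃ / (|x̄|² + 1)^{(d+α−2)/2} with respect to Lebesgue measure, where C₃ = π^{(1−d)/2} Γ((α+d)/2−1)/Γ((α−1)/2). For ε > 0 there exists c₁ = c₁(ε, α, d) > 0 such that for every ȳ ∈ ℝ^{d−1} and every t with 0 < |t| < ε, ∫_{ℝ^{d−1}} M((x̄,t), ȳ) ω_α(dx̄) ≤ c₁, where M((x̄,t), ȳ) = |t|^{α−1} (|ȳ|² + 1)^{(d+α−2)/2} / (|x̄ − ȳ|² + t²)^{(d+α−2)/2}. -/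
set_option maxHeartbeats 1000000

open MeasureTheory Module ENNReal

lemma my_lintegral_eq_smul {E : Type*} [NormedAddCommGroup E] [NormedSpace ℝ E]
    [MeasurableSpace E] [BorelSpace E] [FiniteDimensional ℝ E]
    (μ : Measure E) [μ.IsAddHaarMeasure] (f : E → ℝ≥0∞) {R : ℝ} (hR : R ≠ 0) :
    ∫⁻ x, f x ∂μ
      = ENNReal.ofReal |R ^ (finrank ℝ E)| * ∫⁻ x, f (R • x) ∂μ := by
  have h1 : ∫⁻ x, f (R • x) ∂μ = ∫⁻ y, f y ∂(Measure.map (R • ·) μ) :=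
    (lintegral_map_equiv f
      (Homeomorph.smul (isUnit_iff_ne_zero.2 hR).unit).toMeasurableEquiv).symm
  rw [h1, Measure.map_addHaar_smul μ hR, lintegral_smul_measure, smul_eq_mul, ← mul_assoc,
    ← ENNReal.ofReal_mul (abs_nonneg _), ← abs_mul,
    mul_inv_cancel₀ (pow_ne_zero _ hR), abs_one, ENNReal.ofReal_one, one_mul]

lemma my_finite_I {E : Type*} [NormedAddCommGroup E] [NormedSpace ℝ E]
    [MeasurableSpace E] [BorelSpace E] [FiniteDimensional ℝ E]
    (μ : Measure E) [μ.IsAddHaarMeasure] {p : ℝ} (hp : 0 < p)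
    (hnp : (finrank ℝ E : ℝ) < 2 * p) :
    ∫⁻ x : E, ENNReal.ofReal (((‖x‖ ^ 2 + 1) ^ p)⁻¹) ∂μ < ∞ := by
  have key : ∀ x : E, ((‖x‖ ^ 2 + 1) ^ p)⁻¹ ≤ 2 ^ p * (1 + ‖x‖) ^ (-(2 * p)) := by
    intro x
    have h0 : (0:ℝ) ≤ ‖x‖ := norm_nonneg x
    have h1 : (0:ℝ) < ‖x‖ ^ 2 + 1 := by positivity
    have h2 : (0:ℝ) < 1 + ‖x‖ := by positivity
    have h3 : (1 + ‖x‖) ^ (2*p) ≤ 2 ^ p * (‖x‖ ^ 2 + 1) ^ p := by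
      have e : (1 + ‖x‖) ^ (2*p) = ((1 + ‖x‖) ^ (2:ℕ)) ^ p := by
        rw [← Real.rpow_natCast (1+‖x‖) 2, ← Real.rpow_mul h2.le]; norm_num
      rw [e, ← Real.mul_rpow (by norm_num) h1.le]
      apply Real.rpow_le_rpow (by positivity) (by nlinarith [sq_nonneg (1 - ‖x‖)]) hp.le
    rw [Real.rpow_neg h2.le, ← div_eq_mul_inv, le_div_iff₀ (by positivity),
      inv_mul_le_iff₀ (by positivity)]
    exact h3.trans_eq (mul_comm _ _)
  calc ∫⁻ x : E, ENNReal.ofReal (((‖x‖ ^ 2 + 1) ^ p)⁻¹) ∂μ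
      ≤ ∫⁻ x : E, ENNReal.ofReal (2 ^ p) * ENNReal.ofReal ((1 + ‖x‖) ^ (-(2 * p))) ∂μ := by
        apply lintegral_mono
        intro x
        dsimp only
        rw [← ENNReal.ofReal_mul (by positivity)]
        exact ENNReal.ofReal_le_ofReal (key x)
    _ = ENNReal.ofReal (2 ^ p) * ∫⁻ x : E, ENNReal.ofReal ((1 + ‖x‖) ^ (-(2 * p))) ∂μ :=
        lintegral_const_mul' _ _ ENNReal.ofReal_ne_top
    _ < ∞ := ENNReal.mul_lt_top ENNReal.ofReal_lt_top (finite_integral_one_add_norm hnp)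

/-- The key pointwise estimate, purely in terms of real numbers.
Here `r` plays the role of `|t| ^ (α-1)`, `T` of `t ^ 2`,
`a` of `‖x - y‖`, `u` of `‖x‖`, `v` of `‖y‖`. -/
lemma my_pointwise {p C₃ K r T a u v : ℝ} (hp : 0 < p) (hC₃ : 0 ≤ C₃)
    (hr0 : 0 ≤ r) (hrK : r ≤ K) (hK0 : 0 < K)
    (ha0 : 0 ≤ a) (hu0 : 0 ≤ u) (hv0 : 0 ≤ v) (hT : 0 < T) (hT1 : T ≤ 1 ∨ True)
    (hvua : v ≤ u + a) :
    C₃ / (u ^ 2 + 1) ^ p * (r * (v ^ 2 + 1) ^ p / (a ^ 2 + T) ^ p)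
      ≤ C₃ * 8 ^ p * (r * (((a ^ 2 + T) ^ p)⁻¹))
        + C₃ * 8 ^ p * K * (((u ^ 2 + 1) ^ p)⁻¹)
        + C₃ * 8 ^ p * K * (((a ^ 2 + 1) ^ p)⁻¹) := by
  have hBp : (0:ℝ) < a ^ 2 + T := by positivity
  have hAp : (0:ℝ) < v ^ 2 + 1 := by positivity
  have hCp : (0:ℝ) < u ^ 2 + 1 := by positivity
  have hDp : (0:ℝ) < a ^ 2 + 1 := by positivity
  have hBpnn : (0:ℝ) < (a ^ 2 + T) ^ p := Real.rpow_pos_of_pos hBp _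
  have hCpnn : (0:ℝ) < (u ^ 2 + 1) ^ p := Real.rpow_pos_of_pos hCp _
  have hDpnn : (0:ℝ) < (a ^ 2 + 1) ^ p := Real.rpow_pos_of_pos hDp _
  have hApnn : (0:ℝ) < (v ^ 2 + 1) ^ p := Real.rpow_pos_of_pos hAp _
  have h4p : (0:ℝ) < 4 ^ p := Real.rpow_pos_of_pos (by norm_num) _
  have h2p : (0:ℝ) < 2 ^ p := Real.rpow_pos_of_pos (by norm_num) _
  have h8p : (0:ℝ) < 8 ^ p := Real.rpow_pos_of_pos (by norm_num) _
  have h48 : (4:ℝ) ^ p * 2 ^ p = 8 ^ p := by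
    rw [← Real.mul_rpow (by norm_num) (by norm_num)]; norm_num
  have h48' : (4:ℝ) ^ p ≤ 8 ^ p :=
    Real.rpow_le_rpow (by norm_num) (by norm_num) hp.le
  have hvsq : v ^ 2 ≤ (u + a) ^ 2 := by nlinarith [mul_self_le_mul_self hv0 hvua]
  rcases le_total a 1 with h1 | h1
  · -- near region : bound by first term
    have hA4 : (v ^ 2 + 1) ^ p ≤ 4 ^ p * (u ^ 2 + 1) ^ p := by
      rw [← Real.mul_rpow (by norm_num) hCp.le]
      exact Real.rpow_le_rpow hAp.le (by nlinarith [sq_nonneg (u - a)]) hp.le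
    have hfrac : (v ^ 2 + 1) ^ p * ((u ^ 2 + 1) ^ p)⁻¹ ≤ 4 ^ p := by
      rw [mul_inv_le_iff₀ hCpnn]; exact hA4
    have step : C₃ / (u ^ 2 + 1) ^ p * (r * (v ^ 2 + 1) ^ p / (a ^ 2 + T) ^ p)
        ≤ C₃ * 8 ^ p * (r * (((a ^ 2 + T) ^ p)⁻¹)) := by
      calc C₃ / (u ^ 2 + 1) ^ p * (r * (v ^ 2 + 1) ^ p / (a ^ 2 + T) ^ p)
          = (C₃ * (r * ((a ^ 2 + T) ^ p)⁻¹)) *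
            ((v ^ 2 + 1) ^ p * ((u ^ 2 + 1) ^ p)⁻¹) := by
            rw [div_eq_mul_inv, div_eq_mul_inv]; ring
        _ ≤ (C₃ * (r * ((a ^ 2 + T) ^ p)⁻¹)) * 4 ^ p :=
            mul_le_mul_of_nonneg_left hfrac (by positivity)
        _ ≤ (C₃ * (r * ((a ^ 2 + T) ^ p)⁻¹)) * 8 ^ p :=
            mul_le_mul_of_nonneg_left h48' (by positivity)
        _ = C₃ * 8 ^ p * (r * (((a ^ 2 + T) ^ p)⁻¹)) := by ring
    have hn2 : 0 ≤ C₃ * 8 ^ p * K * (((u ^ 2 + 1) ^ p)⁻¹) := by positivity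
    have hn3 : 0 ≤ C₃ * 8 ^ p * K * (((a ^ 2 + 1) ^ p)⁻¹) := by positivity
    linarith [step]
  · -- far region
    rcases le_total (a ^ 2) (u ^ 2 + 1) with h2 | h2
    · -- lands in third term
      have hA4 : (v ^ 2 + 1) ^ p ≤ 4 ^ p * (u ^ 2 + 1) ^ p := by
        rw [← Real.mul_rpow (by norm_num) hCp.le]
        exact Real.rpow_le_rpow hAp.le (by nlinarith [sq_nonneg (u - a)]) hp.le
      have hfrac : (v ^ 2 + 1) ^ p * ((u ^ 2 + 1) ^ p)⁻¹ ≤ 4 ^ p := by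
        rw [mul_inv_le_iff₀ hCpnn]; exact hA4
      have hDB : (a ^ 2 + 1) ^ p ≤ 2 ^ p * (a ^ 2 + T) ^ p := by
        rw [← Real.mul_rpow (by norm_num) hBp.le]
        exact Real.rpow_le_rpow hDp.le
          (by nlinarith [mul_self_le_mul_self (by norm_num : (0:ℝ) ≤ 1) h1]) hp.le
      have hBD : ((a ^ 2 + T) ^ p)⁻¹ ≤ 2 ^ p * ((a ^ 2 + 1) ^ p)⁻¹ := by
        rw [← one_div, ← div_eq_mul_inv, div_le_div_iff₀ hBpnn hDpnn, one_mul]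
        exact hDB
      have step : C₃ / (u ^ 2 + 1) ^ p * (r * (v ^ 2 + 1) ^ p / (a ^ 2 + T) ^ p)
          ≤ C₃ * 8 ^ p * K * (((a ^ 2 + 1) ^ p)⁻¹) := by
        calc C₃ / (u ^ 2 + 1) ^ p * (r * (v ^ 2 + 1) ^ p / (a ^ 2 + T) ^ p)
            = C₃ * ((v ^ 2 + 1) ^ p * ((u ^ 2 + 1) ^ p)⁻¹) * r *
              ((a ^ 2 + T) ^ p)⁻¹ := by
              rw [div_eq_mul_inv, div_eq_mul_inv]; ring
          _ ≤ C₃ * (4 ^ p) * K * (2 ^ p * ((a ^ 2 + 1) ^ p)⁻¹) := by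
              have hb1 : C₃ * ((v ^ 2 + 1) ^ p * ((u ^ 2 + 1) ^ p)⁻¹) ≤ C₃ * 4 ^ p :=
                mul_le_mul_of_nonneg_left hfrac hC₃
              have hb2 : C₃ * ((v ^ 2 + 1) ^ p * ((u ^ 2 + 1) ^ p)⁻¹) * r
                  ≤ C₃ * 4 ^ p * K :=
                mul_le_mul hb1 hrK hr0 (by positivity)
              exact mul_le_mul hb2 hBD (inv_nonneg.mpr hBpnn.le) (by positivity)
          _ = C₃ * 8 ^ p * K * (((a ^ 2 + 1) ^ p)⁻¹) := by
              rw [← h48]; ring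
      have hn1 : 0 ≤ C₃ * 8 ^ p * (r * (((a ^ 2 + T) ^ p)⁻¹)) := by positivity
      have hn2 : 0 ≤ C₃ * 8 ^ p * K * (((u ^ 2 + 1) ^ p)⁻¹) := by positivity
      linarith [step]
    · -- lands in second term
      have hA4B : (v ^ 2 + 1) ^ p ≤ 4 ^ p * (a ^ 2 + T) ^ p := by
        rw [← Real.mul_rpow (by norm_num) hBp.le]
        exact Real.rpow_le_rpow hAp.le (by nlinarith [sq_nonneg (u - a)]) hp.le
      have hfrac : (v ^ 2 + 1) ^ p * ((a ^ 2 + T) ^ p)⁻¹ ≤ 4 ^ p := by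
        rw [mul_inv_le_iff₀ hBpnn]; exact hA4B
      have step : C₃ / (u ^ 2 + 1) ^ p * (r * (v ^ 2 + 1) ^ p / (a ^ 2 + T) ^ p)
          ≤ C₃ * 8 ^ p * K * (((u ^ 2 + 1) ^ p)⁻¹) := by
        calc C₃ / (u ^ 2 + 1) ^ p * (r * (v ^ 2 + 1) ^ p / (a ^ 2 + T) ^ p)
            = C₃ * ((v ^ 2 + 1) ^ p * ((a ^ 2 + T) ^ p)⁻¹) * r *
              ((u ^ 2 + 1) ^ p)⁻¹ := by
              rw [div_eq_mul_inv, div_eq_mul_inv]; ring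
          _ ≤ C₃ * (8 ^ p) * K * ((u ^ 2 + 1) ^ p)⁻¹ := by
              have hb1 : C₃ * ((v ^ 2 + 1) ^ p * ((a ^ 2 + T) ^ p)⁻¹) ≤ C₃ * 4 ^ p :=
                mul_le_mul_of_nonneg_left hfrac hC₃
              have hb1' : C₃ * ((v ^ 2 + 1) ^ p * ((a ^ 2 + T) ^ p)⁻¹) ≤ C₃ * 8 ^ p :=
                hb1.trans (mul_le_mul_of_nonneg_left h48' hC₃)
              have hb2 : C₃ * ((v ^ 2 + 1) ^ p * ((a ^ 2 + T) ^ p)⁻¹) * r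
                  ≤ C₃ * 8 ^ p * K :=
                mul_le_mul hb1' hrK hr0 (by positivity)
              exact mul_le_mul_of_nonneg_right hb2 (inv_nonneg.mpr hCpnn.le)
          _ = C₃ * 8 ^ p * K * (((u ^ 2 + 1) ^ p)⁻¹) := rfl
      have hn1 : 0 ≤ C₃ * 8 ^ p * (r * (((a ^ 2 + T) ^ p)⁻¹)) := by positivity
      have hn3 : 0 ≤ C₃ * 8 ^ p * K * (((a ^ 2 + 1) ^ p)⁻¹) := by positivity
      linarith [step]

theorem martin_integral_bound_halfspace (d : ℕ) (hd : 2 ≤ d)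
    (α : ℝ) (hα : α ∈ Set.Ioo (1:ℝ) 2)
    (C₃ : ℝ)
    (hC₃ : C₃ = Real.pi ^ ((1 - (d : ℝ)) / 2) * Real.Gamma ((α + d) / 2 - 1)
      / Real.Gamma ((α - 1) / 2))
    (ω : Measure (EuclideanSpace ℝ (Fin (d - 1))))
    (hω : ω = volume.withDensity (fun x : EuclideanSpace ℝ (Fin (d - 1)) =>
      ENNReal.ofReal (C₃ / (‖x‖ ^ 2 + 1) ^ (((d : ℝ) + α - 2) / 2))))
    (ε : ℝ) (hε : 0 < ε) :
    ∃ c₁ : ℝ, 0 < c₁ ∧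
      ∀ (y : EuclideanSpace ℝ (Fin (d - 1))) (t : ℝ), 0 < |t| → |t| < ε →
        ∫ x, |t| ^ (α - 1) * (‖y‖ ^ 2 + 1) ^ (((d : ℝ) + α - 2) / 2)
            / (‖x - y‖ ^ 2 + t ^ 2) ^ (((d : ℝ) + α - 2) / 2) ∂ω
          ≤ c₁ := by
  obtain ⟨hα1, hα2⟩ := hα
  set p : ℝ := ((d : ℝ) + α - 2) / 2 with hpdef
  have hd2 : (2:ℝ) ≤ (d:ℝ) := by exact_mod_cast hd
  have hp : 0 < p := by rw [hpdef]; linarith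
  have hfr : ((finrank ℝ (EuclideanSpace ℝ (Fin (d - 1)))) : ℝ) = (d:ℝ) - 1 := by
    rw [finrank_euclideanSpace_fin, Nat.cast_sub (by omega)]
    norm_num
  have hnp : ((finrank ℝ (EuclideanSpace ℝ (Fin (d - 1)))) : ℝ) < 2 * p := by
    rw [hfr, hpdef]; linarith
  have hC₃pos : 0 < C₃ := by
    rw [hC₃]
    have h1 : 0 < Real.Gamma ((α + d) / 2 - 1) := Real.Gamma_pos_of_pos (by linarith)
    have h2 : 0 < Real.Gamma ((α - 1) / 2) := Real.Gamma_pos_of_pos (by linarith)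
    have h3 : 0 < Real.pi ^ ((1 - (d : ℝ)) / 2) := Real.rpow_pos_of_pos Real.pi_pos _
    positivity
  set I : ℝ≥0∞ :=
    ∫⁻ x : EuclideanSpace ℝ (Fin (d - 1)), ENNReal.ofReal (((‖x‖ ^ 2 + 1) ^ p)⁻¹)
    with hIdef
  have hI : I < ∞ := my_finite_I volume hp hnp
  set K : ℝ := max 1 (ε ^ (α - 1)) with hKdef
  have hK1 : (1:ℝ) ≤ K := le_max_left _ _
  have hK0 : (0:ℝ) < K := lt_of_lt_of_le one_pos hK1
  set c : ℝ := C₃ * 8 ^ p with hcdef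
  have h8p : (0:ℝ) < 8 ^ p := Real.rpow_pos_of_pos (by norm_num) _
  have hc : 0 < c := by rw [hcdef]; positivity
  have hM : 0 ≤ I.toReal := ENNReal.toReal_nonneg
  refine ⟨c * I.toReal + 2 * (c * K * I.toReal) + 1, by positivity, ?_⟩
  intro y t ht0' htε
  have ht0 : t ≠ 0 := abs_pos.mp ht0'
  have hs : (0:ℝ) < |t| := ht0'
  have ht2 : (0:ℝ) < t ^ 2 := lt_of_le_of_ne (sq_nonneg t) (Ne.symm (pow_ne_zero 2 ht0))
  have hBpos : ∀ x : EuclideanSpace ℝ (Fin (d - 1)), (0:ℝ) < ‖x - y‖ ^ 2 + t ^ 2 :=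
    fun x => by positivity
  have hsnn : (0:ℝ) ≤ |t| ^ (α - 1) := Real.rpow_nonneg (abs_nonneg t) _
  have hsK : |t| ^ (α - 1) ≤ K :=
    le_trans (Real.rpow_le_rpow (abs_nonneg t) htε.le (by linarith)) (le_max_right _ _)
  -- continuity / measurability facts
  have hcontf : Continuous fun x : EuclideanSpace ℝ (Fin (d - 1)) =>
      |t| ^ (α - 1) * (‖y‖ ^ 2 + 1) ^ p / (‖x - y‖ ^ 2 + t ^ 2) ^ p := by
    apply continuous_const.div
    · exact (((continuous_id.sub continuous_const).norm.pow 2).add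
        continuous_const).rpow_const (fun x => Or.inr hp.le)
    · exact fun x => ne_of_gt (Real.rpow_pos_of_pos (hBpos x) _)
  have hfnn : ∀ x : EuclideanSpace ℝ (Fin (d - 1)), 0 ≤
      |t| ^ (α - 1) * (‖y‖ ^ 2 + 1) ^ p / (‖x - y‖ ^ 2 + t ^ 2) ^ p := by
    intro x
    have := hBpos x
    positivity
  have hdm : Measurable fun x : EuclideanSpace ℝ (Fin (d - 1)) =>
      ENNReal.ofReal (C₃ / (‖x‖ ^ 2 + 1) ^ p) := by
    apply (ENNReal.continuous_ofReal.comp _).measurable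
    apply continuous_const.div
    · exact ((continuous_norm.pow 2).add continuous_const).rpow_const (fun x => Or.inr hp.le)
    · exact fun x => ne_of_gt (Real.rpow_pos_of_pos (by positivity) _)
  have hm1 : Measurable fun x : EuclideanSpace ℝ (Fin (d - 1)) =>
      ENNReal.ofReal (c * (|t| ^ (α - 1) * (((‖x - y‖ ^ 2 + t ^ 2) ^ p)⁻¹))) := by
    apply (ENNReal.continuous_ofReal.comp _).measurable
    apply continuous_const.mul
    apply continuous_const.mul
    apply Continuous.inv₀
    · exact (((continuous_id.sub continuous_const).norm.pow 2).add
        continuous_const).rpow_const (fun x => Or.inr hp.le)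
    · exact fun x => ne_of_gt (Real.rpow_pos_of_pos (hBpos x) _)
  have hm2 : Measurable fun x : EuclideanSpace ℝ (Fin (d - 1)) =>
      ENNReal.ofReal (c * K * (((‖x‖ ^ 2 + 1) ^ p)⁻¹)) := by
    apply (ENNReal.continuous_ofReal.comp _).measurable
    apply continuous_const.mul
    apply Continuous.inv₀
    · exact ((continuous_norm.pow 2).add continuous_const).rpow_const
        (fun x => Or.inr hp.le)
    · exact fun x => ne_of_gt (Real.rpow_pos_of_pos (by positivity) _)
  -- pass to the lower Lebesgue integral
  rw [hω, integral_eq_lintegral_of_nonneg_ae (ae_of_all _ hfnn)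
    hcontf.aestronglyMeasurable]
  apply ENNReal.toReal_le_of_le_ofReal (by positivity)
  rw [lintegral_withDensity_eq_lintegral_mul_non_measurable _ hdm
    (ae_of_all _ fun x => ENNReal.ofReal_lt_top)]
  -- the three integrals
  have hT1 : ∫⁻ x : EuclideanSpace ℝ (Fin (d - 1)),
      ENNReal.ofReal (c * (|t| ^ (α - 1) * (((‖x - y‖ ^ 2 + t ^ 2) ^ p)⁻¹))) = ENNReal.ofReal c * I := by
    have e1 : ∀ x : EuclideanSpace ℝ (Fin (d - 1)),
        ENNReal.ofReal (c * (|t| ^ (α - 1) * (((‖x - y‖ ^ 2 + t ^ 2) ^ p)⁻¹)))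
        = ENNReal.ofReal (c * |t| ^ (α - 1)) *
          ENNReal.ofReal (((‖x - y‖ ^ 2 + t ^ 2) ^ p)⁻¹) := by
      intro x
      rw [← ENNReal.ofReal_mul (by positivity)]
      congr 1
      ring
    rw [lintegral_congr e1, lintegral_const_mul' _ _ ENNReal.ofReal_ne_top]
    have e2 : (∫⁻ x : EuclideanSpace ℝ (Fin (d - 1)),
        ENNReal.ofReal (((‖x - y‖ ^ 2 + t ^ 2) ^ p)⁻¹))
        = ∫⁻ z : EuclideanSpace ℝ (Fin (d - 1)),
          ENNReal.ofReal (((‖z‖ ^ 2 + t ^ 2) ^ p)⁻¹) :=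
      lintegral_sub_right_eq_self
        (fun z : EuclideanSpace ℝ (Fin (d - 1)) =>
          ENNReal.ofReal (((‖z‖ ^ 2 + t ^ 2) ^ p)⁻¹)) y
    have e3 : (∫⁻ z : EuclideanSpace ℝ (Fin (d - 1)),
        ENNReal.ofReal (((‖z‖ ^ 2 + t ^ 2) ^ p)⁻¹))
        = ENNReal.ofReal |t ^ (finrank ℝ (EuclideanSpace ℝ (Fin (d - 1))))| *
          ∫⁻ z : EuclideanSpace ℝ (Fin (d - 1)),
            ENNReal.ofReal (((‖t • z‖ ^ 2 + t ^ 2) ^ p)⁻¹) :=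
      my_lintegral_eq_smul volume _ ht0
    have e4 : ∀ z : EuclideanSpace ℝ (Fin (d - 1)),
        ENNReal.ofReal (((‖t • z‖ ^ 2 + t ^ 2) ^ p)⁻¹)
        = ENNReal.ofReal (((t ^ 2) ^ p)⁻¹) * ENNReal.ofReal (((‖z‖ ^ 2 + 1) ^ p)⁻¹) := by
      intro z
      have hn : ‖t • z‖ ^ 2 + t ^ 2 = t ^ 2 * (‖z‖ ^ 2 + 1) := by
        rw [norm_smul, Real.norm_eq_abs, mul_pow, sq_abs]; ring
      rw [hn, Real.mul_rpow ht2.le (by positivity), mul_inv,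
        ENNReal.ofReal_mul (by positivity)]
    rw [e2, e3, lintegral_congr e4, lintegral_const_mul' _ _ ENNReal.ofReal_ne_top,
      ← hIdef]
    have hcoef : c * |t| ^ (α - 1) *
        |t ^ (finrank ℝ (EuclideanSpace ℝ (Fin (d - 1))))| * (((t ^ 2) ^ p)⁻¹) = c := by
      have h1 : |t ^ (finrank ℝ (EuclideanSpace ℝ (Fin (d - 1))))|
          = |t| ^ (((finrank ℝ (EuclideanSpace ℝ (Fin (d - 1)))) : ℕ) : ℝ) := by
        rw [abs_pow, ← Real.rpow_natCast]
      have h2 : (((t ^ 2) ^ p)⁻¹ : ℝ) = |t| ^ (-(((2:ℕ):ℝ) * p)) := by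
        rw [← sq_abs, ← Real.rpow_natCast |t| 2, ← Real.rpow_mul (abs_nonneg t),
          ← Real.rpow_neg (abs_nonneg t)]
      rw [h1, h2, mul_assoc, mul_assoc, ← Real.rpow_add hs, ← Real.rpow_add hs, hfr]
      rw [show α - 1 + (((d:ℝ) - 1) + -(((2:ℕ):ℝ) * p)) = 0 from by
        rw [hpdef]; push_cast; ring, Real.rpow_zero, mul_one]
    rw [← mul_assoc, ← ENNReal.ofReal_mul (mul_nonneg hc.le hsnn), ← mul_assoc,
      ← ENNReal.ofReal_mul (mul_nonneg (mul_nonneg hc.le hsnn) (abs_nonneg _)), hcoef]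
  have hT2 : ∫⁻ x : EuclideanSpace ℝ (Fin (d - 1)),
      ENNReal.ofReal (c * K * (((‖x‖ ^ 2 + 1) ^ p)⁻¹)) = ENNReal.ofReal (c * K) * I := by
    have e : ∀ x : EuclideanSpace ℝ (Fin (d - 1)),
        ENNReal.ofReal (c * K * (((‖x‖ ^ 2 + 1) ^ p)⁻¹))
        = ENNReal.ofReal (c * K) * ENNReal.ofReal (((‖x‖ ^ 2 + 1) ^ p)⁻¹) :=
      fun x => ENNReal.ofReal_mul (by positivity)
    rw [lintegral_congr e, lintegral_const_mul' _ _ ENNReal.ofReal_ne_top, ← hIdef]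
  have hT3 : ∫⁻ x : EuclideanSpace ℝ (Fin (d - 1)),
      ENNReal.ofReal (c * K * (((‖x - y‖ ^ 2 + 1) ^ p)⁻¹)) = ENNReal.ofReal (c * K) * I := by
    have e : ∀ x : EuclideanSpace ℝ (Fin (d - 1)),
        ENNReal.ofReal (c * K * (((‖x - y‖ ^ 2 + 1) ^ p)⁻¹))
        = ENNReal.ofReal (c * K) * ENNReal.ofReal (((‖x - y‖ ^ 2 + 1) ^ p)⁻¹) :=
      fun x => ENNReal.ofReal_mul (by positivity)
    have e2 : (∫⁻ x : EuclideanSpace ℝ (Fin (d - 1)),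
        ENNReal.ofReal (((‖x - y‖ ^ 2 + 1) ^ p)⁻¹))
        = ∫⁻ z : EuclideanSpace ℝ (Fin (d - 1)),
          ENNReal.ofReal (((‖z‖ ^ 2 + 1) ^ p)⁻¹) :=
      lintegral_sub_right_eq_self
        (fun z : EuclideanSpace ℝ (Fin (d - 1)) =>
          ENNReal.ofReal (((‖z‖ ^ 2 + 1) ^ p)⁻¹)) y
    rw [lintegral_congr e, lintegral_const_mul' _ _ ENNReal.ofReal_ne_top, e2, ← hIdef]
  simp only [Pi.mul_apply]
  calc ∫⁻ x : EuclideanSpace ℝ (Fin (d - 1)),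
        ENNReal.ofReal (C₃ / (‖x‖ ^ 2 + 1) ^ p) * ENNReal.ofReal
            (|t| ^ (α - 1) * (‖y‖ ^ 2 + 1) ^ p / (‖x - y‖ ^ 2 + t ^ 2) ^ p)
      ≤ ∫⁻ x : EuclideanSpace ℝ (Fin (d - 1)),
        (ENNReal.ofReal (c * (|t| ^ (α - 1) * (((‖x - y‖ ^ 2 + t ^ 2) ^ p)⁻¹)))
          + ENNReal.ofReal (c * K * (((‖x‖ ^ 2 + 1) ^ p)⁻¹))
          + ENNReal.ofReal (c * K * (((‖x - y‖ ^ 2 + 1) ^ p)⁻¹))) := by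
        apply lintegral_mono
        intro x
        dsimp only
        rw [← ENNReal.ofReal_mul (by positivity)]
        have hkey : C₃ / (‖x‖ ^ 2 + 1) ^ p *
            (|t| ^ (α - 1) * (‖y‖ ^ 2 + 1) ^ p / (‖x - y‖ ^ 2 + t ^ 2) ^ p)
            ≤ c * (|t| ^ (α - 1) * (((‖x - y‖ ^ 2 + t ^ 2) ^ p)⁻¹))
              + c * K * (((‖x‖ ^ 2 + 1) ^ p)⁻¹)
              + c * K * (((‖x - y‖ ^ 2 + 1) ^ p)⁻¹) := by
          rw [hcdef]
          exact my_pointwise hp hC₃pos.le hsnn hsK hK0 (norm_nonneg _) (norm_nonneg _)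
            (norm_nonneg _) ht2 (Or.inr trivial)
            (by calc ‖y‖ = ‖x - (x - y)‖ := by rw [_root_.sub_sub_cancel]
                  _ ≤ ‖x‖ + ‖x - y‖ := norm_sub_le _ _)
        calc ENNReal.ofReal (C₃ / (‖x‖ ^ 2 + 1) ^ p *
              (|t| ^ (α - 1) * (‖y‖ ^ 2 + 1) ^ p / (‖x - y‖ ^ 2 + t ^ 2) ^ p))
            ≤ ENNReal.ofReal (c * (|t| ^ (α - 1) * (((‖x - y‖ ^ 2 + t ^ 2) ^ p)⁻¹))
              + c * K * (((‖x‖ ^ 2 + 1) ^ p)⁻¹)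
              + c * K * (((‖x - y‖ ^ 2 + 1) ^ p)⁻¹)) := ENNReal.ofReal_le_ofReal hkey
          _ = _ := by
              rw [ENNReal.ofReal_add (by positivity) (by positivity),
                ENNReal.ofReal_add (by positivity) (by positivity)]
    _ = ENNReal.ofReal c * I + ENNReal.ofReal (c * K) * I
        + ENNReal.ofReal (c * K) * I := by
        rw [lintegral_add_left (f := fun x : EuclideanSpace ℝ (Fin (d - 1)) =>
          ENNReal.ofReal (c * (|t| ^ (α - 1) * (((‖x - y‖ ^ 2 + t ^ 2) ^ p)⁻¹)))
            + ENNReal.ofReal (c * K * (((‖x‖ ^ 2 + 1) ^ p)⁻¹))) (hm1.add hm2),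
          lintegral_add_left hm1, hT1, hT2, hT3]
    _ ≤ ENNReal.ofReal (c * I.toReal + 2 * (c * K * I.toReal) + 1) := by
        rw [← ENNReal.ofReal_toReal hI.ne, ← ENNReal.ofReal_mul hc.le,
          ← ENNReal.ofReal_mul (by positivity),
          ← ENNReal.ofReal_add (by positivity) (by positivity),
          ← ENNReal.ofReal_add (by positivity) (by positivity),
          ENNReal.toReal_ofReal hM]
        exact ENNReal.ofReal_le_ofReal (by nlinarith [mul_nonneg (mul_nonneg hc.le hK0.le) hM])
end
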